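/- For every integer r ≥ 1 there exists an (r,0)-circulant: there exist n ≥ 1 and a set S of nonzero elements of Z_n such that the circulant Circ(n, S) is r-regular and triangle-free (equivalently, e(v) = 0 for every vertex v). -/

import Mathlib

def Circulant (n : ℕ) (S : Set (ZMod n)) : SimpleGraph (ZMod n) where
  Adj x y := x ≠ y ∧ x - y ∈ S ∪ -S
  symm := by
    constructor
    rintro x y ⟨hxy, h⟩
    refine ⟨hxy.symm, ?_⟩
    have hyx : y - x = -(x - y) := by ring
    rw [hyx]
    rcases h with h | h
    · exact Or.inr (Set.neg_mem_neg.mpr h)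
    · exact Or.inl (Set.mem_neg.mp h)
  loopless := ⟨fun x h => h.1 rfl⟩

noncomputable def nbhdEdgeCount {V : Type*} (G : SimpleGraph V) (v : V) : ℕ :=
  Nat.card (SimpleGraph.induce (G.neighborSet v) G).edgeSet

private lemma cast_two_eq_one_iff (a : ℕ) : (a : ZMod 2) = 1 ↔ a % 2 = 1 := by
  rw [← ZMod.natCast_mod a 2]
  rcases Nat.mod_two_eq_zero_or_one a with h | h <;> simp [h]

theorem exists_r_zero_circulant (r : ℕ) (hr : 1 ≤ r) :
    ∃ (n : ℕ), 1 ≤ n ∧ ∃ S : Set (ZMod n), (∀ s ∈ S, s ≠ 0) ∧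
      (∀ v : ZMod n, Nat.card ((Circulant n S).neighborSet v) = r) ∧
      (Circulant n S).CliqueFree 3 ∧
      (∀ v : ZMod n, nbhdEdgeCount (Circulant n S) v = 0) := by
  haveI : NeZero (2*r) := ⟨by omega⟩
  set f : ZMod (2*r) →+* ZMod 2 := ZMod.castHom (dvd_mul_right 2 r) (ZMod 2) with hf
  set S : Set (ZMod (2*r)) := {x | f x = 1} with hS
  have hfval : ∀ x : ZMod (2*r), f x = (x.val : ZMod 2) := by
    intro x; rw [hf, ZMod.castHom_apply, ZMod.natCast_val]
  have hneg : ∀ x : ZMod (2*r), f (-x) = f x := by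
    intro x; rw [map_neg]; exact CharTwo.neg_eq _
  have hnegS : -S = S := by
    ext x
    simp only [hS, Set.mem_neg, Set.mem_setOf_eq]
    rw [hneg]
  have h0 : (0 : ZMod (2*r)) ∉ S := by
    simp [hS]
  -- adjacency characterisation
  have hadj : ∀ x y : ZMod (2*r), (Circulant (2*r) S).Adj x y ↔ x - y ∈ S := by
    intro x y
    constructor
    · rintro ⟨hne, h⟩
      rcases h with h | h
      · exact h
      · rwa [← hnegS]
    · intro h
      refine ⟨?_, Or.inl h⟩
      rintro rfl
      simp at h
      exact h0 (by simpa using h)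
  -- cardinality of S
  have hScard : Nat.card S = r := by
    have e : Fin r ≃ S := by
      refine Equiv.ofBijective (fun i => ⟨((2*(i:ℕ)+1 : ℕ) : ZMod (2*r)), ?_⟩) ⟨?_, ?_⟩
      · show f _ = 1
        rw [map_natCast, cast_two_eq_one_iff]
        omega
      · intro i j hij
        have h := congrArg (fun x : S => (x : ZMod (2*r)).val) hij
        simp only [ZMod.val_natCast] at h
        rw [Nat.mod_eq_of_lt (by omega), Nat.mod_eq_of_lt (by omega)] at h
        exact Fin.ext (by omega)
      · rintro ⟨x, hx⟩
        have hx1 : x.val % 2 = 1 := by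
          have := hx
          rw [hS, Set.mem_setOf_eq, hfval, cast_two_eq_one_iff] at this
          exact this
        have hlt : x.val < 2*r := ZMod.val_lt x
        refine ⟨⟨x.val / 2, by omega⟩, ?_⟩
        apply Subtype.ext
        show ((2*(x.val/2)+1 : ℕ) : ZMod (2*r)) = x
        have : 2*(x.val/2)+1 = x.val := by omega
        rw [this, ZMod.natCast_rightInverse x]
    rw [Nat.card_congr e.symm, Nat.card_eq_fintype_card, Fintype.card_fin]
  -- triangle-free
  have htf : (Circulant (2*r) S).CliqueFree 3 := by
    intro t ht
    rw [SimpleGraph.is3Clique_iff] at ht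
    obtain ⟨a, b, c, hab, hac, hbc, rfl⟩ := ht
    rw [hadj] at hab hac hbc
    rw [hS, Set.mem_setOf_eq] at hab hac hbc
    have : f (a - c) = f (a - b) + f (b - c) := by
      rw [← map_add]; ring_nf
    rw [hab, hbc, hac] at this
    exact one_ne_zero (this.trans (by decide))
  refine ⟨2*r, by omega, S, ?_, ?_, htf, ?_⟩
  · intro s hs h
    exact h0 (h ▸ hs)
  · -- regularity
    intro v
    have e : S ≃ ((Circulant (2*r) S).neighborSet v) := by
      refine ⟨fun s => ⟨v - s, ?_⟩, fun y => ⟨v - y, ?_⟩, ?_, ?_⟩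
      · show (Circulant (2*r) S).Adj v (v - s)
        rw [hadj]
        simp only [sub_sub_cancel]; exact s.2
      · have := y.2
        rw [SimpleGraph.mem_neighborSet, hadj] at this
        exact this
      · intro s; apply Subtype.ext; simp
      · intro y; apply Subtype.ext; simp
    rw [← Nat.card_congr e, hScard]
  · -- edge count zero
    intro v
    have hempty : (SimpleGraph.induce ((Circulant (2*r) S).neighborSet v) (Circulant (2*r) S)).edgeSet = ∅ := by
      ext e
      refine ⟨?_, fun h => h.elim⟩
      induction e with
      | _ a b =>
        intro h
        rw [SimpleGraph.mem_edgeSet] at h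
        have hG : (Circulant (2*r) S).Adj a b := h
        have hva : (Circulant (2*r) S).Adj v a := a.2
        have hvb : (Circulant (2*r) S).Adj v b := b.2
        exact htf {v, (a : ZMod (2*r)), (b : ZMod (2*r))} (SimpleGraph.is3Clique_triple_iff.mpr ⟨hva, hvb, hG⟩)
    rw [nbhdEdgeCount, hempty]
    simp
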